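/- Construction of additive MDS codes with d = 3 from partial spreads: let π_0, π_∞ be h-dimensional F_q-subspaces of F_q^{2h} with F_q^{2h} = π_0 ⊕ π_∞, and suppose π_1, ..., π_k are F_q-subspaces of F_q^{2h} of dimensions r_1, ..., r_k ≤ h such that π_i ∩ π_j = {0} for all distinct i, j ∈ {0, 1, ..., k, ∞}. Then there is an additive code over F_{q^h} of length k + 2, F_q-dimension r = Σ r_i, and minimum distance 3; it is of the form {(u_1, ..., u_k, f(u), g(u)) : u_i ∈ S_i} for additive subgroups S_i ⊆ F_{q^h} with |S_i| = q^{r_i} and F_q-linear maps f, g. -/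

import Mathlib

theorem additive_MDS_construction_d3
    (q h k : ℕ) (rdim : Fin k → ℕ) (Fq K : Type)
    [Field Fq] [Fintype Fq] [Field K] [Fintype K] [DecidableEq K] [Algebra Fq K]
    (hq : Fintype.card Fq = q) (hK : Fintype.card K = q ^ h)
    (hfr : Module.finrank Fq K = h)
    (π : Fin k → Submodule Fq (K × K))
    (hdim : ∀ i, Module.finrank Fq (π i) = rdim i) (hle : ∀ i, rdim i ≤ h)
    (hpair : ∀ i j, i ≠ j → π i ⊓ π j = ⊥)
    (h0 : ∀ i, π i ⊓ (Submodule.prod ⊥ ⊤ : Submodule Fq (K × K)) = ⊥)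
    (hinf : ∀ i, π i ⊓ (Submodule.prod ⊤ ⊥ : Submodule Fq (K × K)) = ⊥) :
    ∃ (S : Fin k → Submodule Fq K) (f g : (Fin k → K) →ₗ[Fq] K),
      (∀ i, Nat.card (S i) = q ^ (rdim i)) ∧
      ∀ u : Fin k → K, (∀ i, u i ∈ S i) → u ≠ 0 →
        3 ≤ hammingNorm u + (if f u = 0 then 0 else 1) + (if g u = 0 then 0 else 1) := by
  classical
  -- the first-coordinate projection restricted to each `π i`
  set fm : ∀ i : Fin k, (π i →ₗ[Fq] K) :=
    fun i => (LinearMap.fst Fq K K).comp (π i).subtype with hfm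
  have hinj : ∀ i, Function.Injective (fm i) := by
    intro i
    rw [← LinearMap.ker_eq_bot]
    ext p
    simp only [LinearMap.mem_ker, Submodule.mem_bot]
    constructor
    · intro hp
      have hmem : (p : K × K) ∈ π i ⊓ (Submodule.prod ⊥ ⊤ : Submodule Fq (K × K)) := by
        refine ⟨p.2, ?_, trivial⟩
        simpa [hfm] using hp
      rw [h0 i] at hmem
      exact Subtype.ext (by simpa using hmem)
    · rintro rfl; simp
  set e : ∀ i : Fin k, (π i ≃ₗ[Fq] LinearMap.range (fm i)) :=
    fun i => LinearEquiv.ofInjective (fm i) (hinj i) with he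
  set S : Fin k → Submodule Fq K := fun i => LinearMap.range (fm i) with hS
  -- second coordinate of the point of `π i` above an element of `S i`
  set ψ : ∀ i : Fin k, (S i →ₗ[Fq] K) :=
    fun i => ((LinearMap.snd Fq K K).comp (π i).subtype).comp ((e i).symm : S i →ₗ[Fq] π i)
    with hψ
  have keymem : ∀ i (s : S i), ((s : K), ψ i s) ∈ π i := by
    intro i s
    have h1 : (((e i).symm s : K × K)).1 = (s : K) := by
      have := (e i).apply_symm_apply s
      have h2 : ((e i) ((e i).symm s) : K) = (s : K) := by rw [this]
      rwa [he, LinearEquiv.ofInjective_apply] at h2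
    have h2 : ψ i s = (((e i).symm s : K × K)).2 := rfl
    have : ((s : K), ψ i s) = (((e i).symm s : K × K)) := by
      rw [h2, ← h1]
    rw [this]
    exact ((e i).symm s).2
  -- extend ψ to all of K using a projection onto S i
  have hcompl : ∀ i, ∃ c : Submodule Fq K, IsCompl (S i) c := fun i => (S i).exists_isCompl
  set φ : ∀ i : Fin k, (K →ₗ[Fq] K) :=
    fun i => (ψ i).comp (Submodule.linearProjOfIsCompl (S i) (hcompl i).choose (hcompl i).choose_spec)
    with hφ
  have keyφ : ∀ i x, x ∈ S i → ((x, φ i x) ∈ π i) := by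
    intro i x hx
    have : φ i x = ψ i ⟨x, hx⟩ := by
      simp only [hφ, LinearMap.comp_apply]
      exact congrArg (ψ i) (Submodule.projectionOnto_apply_left (hcompl i).choose_spec ⟨x, hx⟩)
    rw [this]
    exact keymem i ⟨x, hx⟩
  have φzero : ∀ i, φ i 0 = 0 := fun i => map_zero _
  refine ⟨S, ∑ i, (φ i).comp (LinearMap.proj i), ∑ i, (LinearMap.proj i : (Fin k → K) →ₗ[Fq] K),
    ?_, ?_⟩
  · intro i
    have : Nat.card (S i) = Nat.card (π i) := Nat.card_congr (e i).symm.toEquiv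
    rw [this, Nat.card_eq_fintype_card, Module.card_eq_pow_finrank (K := Fq), hq, hdim i]
  · intro u hu hu0
    have hfu : (∑ i, (φ i).comp (LinearMap.proj i)) u = ∑ i, φ i (u i) := by
      simp [LinearMap.sum_apply]
    have hgu : (∑ i, (LinearMap.proj i : (Fin k → K) →ₗ[Fq] K)) u = ∑ i, u i := by
      simp [LinearMap.sum_apply]
    rw [hfu, hgu]
    -- the support of u
    set T : Finset (Fin k) := Finset.univ.filter (fun i => u i ≠ 0) with hT
    have hham : hammingNorm u = T.card := rfl
    have hsum1 : ∑ i, u i = ∑ i ∈ T, u i := by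
      refine (Finset.sum_subset (Finset.subset_univ T) ?_).symm
      intro i _ hi
      simpa [hT] using hi
    have hsum2 : ∑ i, φ i (u i) = ∑ i ∈ T, φ i (u i) := by
      refine (Finset.sum_subset (Finset.subset_univ T) ?_).symm
      intro i _ hi
      have : u i = 0 := by simpa [hT] using hi
      rw [this, φzero]
    have hTpos : T.Nonempty := by
      by_contra hc
      apply hu0
      funext i
      show u i = 0
      by_contra hui
      exact hc ⟨i, by simp [hT, hui]⟩
    rcases Nat.lt_or_ge T.card 3 with hc3 | hc3
    swap
    · rw [hham]; omega
    interval_cases hcard : T.card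
    · exact absurd (Finset.card_eq_zero.mp hcard) (Finset.nonempty_iff_ne_empty.mp hTpos)
    · -- exactly one nonzero coordinate
      obtain ⟨i, hi⟩ := Finset.card_eq_one.mp hcard
      have hui : u i ≠ 0 := by
        have : i ∈ T := by rw [hi]; exact Finset.mem_singleton_self i
        simpa [hT] using this
      have hg : ∑ j, u j = u i := by rw [hsum1, hi, Finset.sum_singleton]
      have hf : ∑ j, φ j (u j) = φ i (u i) := by rw [hsum2, hi, Finset.sum_singleton]
      have hfne : φ i (u i) ≠ 0 := by
        intro hz
        have hmem : (u i, φ i (u i)) ∈ π i ⊓ (Submodule.prod ⊤ ⊥ : Submodule Fq (K × K)) :=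
          ⟨keyφ i (u i) (hu i), trivial, by simpa using hz⟩
        rw [hinf i] at hmem
        exact hui (by simpa using congrArg Prod.fst hmem)
      rw [hg, hf, if_neg hfne, if_neg (hg ▸ hui), hham]
    · -- exactly two nonzero coordinates
      obtain ⟨i, j, hij, hTij⟩ := Finset.card_eq_two.mp hcard
      have hui : u i ≠ 0 := by
        have : i ∈ T := by rw [hTij]; simp
        simpa [hT] using this
      have hg : ∑ l, u l = u i + u j := by
        rw [hsum1, hTij, Finset.sum_insert (by simpa using hij), Finset.sum_singleton]
      have hf : ∑ l, φ l (u l) = φ i (u i) + φ j (u j) := by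
        rw [hsum2, hTij, Finset.sum_insert (by simpa using hij), Finset.sum_singleton]
      rw [hg, hf]
      by_cases hfz : φ i (u i) + φ j (u j) = 0
      · by_cases hgz : u i + u j = 0
        · exfalso
          have hmi : (u i, φ i (u i)) ∈ π i := keyφ i (u i) (hu i)
          have hmj : (u j, φ j (u j)) ∈ π j := keyφ j (u j) (hu j)
          have hneg : (u i, φ i (u i)) = -(u j, φ j (u j)) := by
            have h1 : u i = -u j := by linear_combination hgz
            have h2 : φ i (u i) = -φ j (u j) := by linear_combination hfz
            rw [Prod.neg_mk]
            exact Prod.ext_iff.mpr ⟨h1, h2⟩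
          have hmem : (u i, φ i (u i)) ∈ π i ⊓ π j :=
            ⟨hmi, by rw [hneg]; exact (π j).neg_mem hmj⟩
          rw [hpair i j hij] at hmem
          exact hui (by simpa using congrArg Prod.fst hmem)
        · rw [if_pos hfz, if_neg hgz, hham]
      · rw [if_neg hfz, hham]
        omega
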